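/- Let (X, d, T) be a surjective topological dynamical system and let d^ℕ be a product metric on X^ℕ restricted to the natural extension X̃_T, i.e. a metric equivalent to d_δ(x,y) = sup_i δ_i d(x_i, y_i) for some sequence δ_i → 0 of positive numbers. Then the upper and lower metric mean dimensions satisfy mdim_M(X̃_T, T̃, d^ℕ) = mdim_M(X, T, d) (equality of upper with upper and lower with lower). -/

import Mathlib

open scoped ENNReal Classical

section MeanDimDefs

variable {X : Type*}

/-- A finite open cover of `X`. -/
def IsFinOpenCover [TopologicalSpace X] (α : Finset (Set X)) : Prop :=
  (∀ A ∈ α, IsOpen A) ∧ ⋃₀ (α : Set (Set X)) = Set.univ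

/-- `β` refines `α`: every element of `β` is contained in some element of `α`. -/
def Refines (β α : Finset (Set X)) : Prop :=
  ∀ B ∈ β, ∃ A ∈ α, B ⊆ A

/-- The order of a finite cover: `sup_x (Σ_A 1_A(x)) - 1`. -/
noncomputable def ordCover (α : Finset (Set X)) : ℕ :=
  (⨆ x : X, (α.filter fun A => x ∈ A).card) - 1

/-- `D(α)`: the minimal order of a finite open cover refining `α`. -/
noncomputable def Dcover [TopologicalSpace X] (α : Finset (Set X)) : ℕ :=
  sInf {n | ∃ β : Finset (Set X), IsFinOpenCover β ∧ Refines β α ∧ ordCover β = n}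

/-- The joint `α ∨ β = {U ∩ V : U ∈ α, V ∈ β}`. -/
noncomputable def jointCover (α β : Finset (Set X)) : Finset (Set X) :=
  (α ×ˢ β).image fun p => p.1 ∩ p.2

/-- The preimage cover `T⁻¹ α`. -/
noncomputable def preimCover (T : X → X) (α : Finset (Set X)) : Finset (Set X) :=
  α.image fun A => T ⁻¹' A

/-- `dynCover T α n = ⋁_{i=0}^{n} T^{-i} α`. -/
noncomputable def dynCover (T : X → X) (α : Finset (Set X)) : ℕ → Finset (Set X)
  | 0 => α
  | n + 1 => jointCover α (preimCover T (dynCover T α n))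

/-- Mean dimension relative to a cover:
`mdim(X,T,α) = lim_n D(⋁_{i=0}^{n-1} T^{-i}α)/n = inf_n D(⋁_{i=0}^{n-1} T^{-i}α)/n`. -/
noncomputable def mdimCover [TopologicalSpace X] (T : X → X) (α : Finset (Set X)) : ℝ≥0∞ :=
  ⨅ n : ℕ, (Dcover (dynCover T α n) : ℝ≥0∞) / (n + 1)

/-- Mean topological dimension. -/
noncomputable def mdim (X : Type*) [TopologicalSpace X] (T : X → X) : ℝ≥0∞ :=
  ⨆ (α : Finset (Set X)) (_ : IsFinOpenCover α), mdimCover T α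

/-- Topological (covering) dimension, `dim X = sup_α D(α)`. -/
noncomputable def covDim (X : Type*) [TopologicalSpace X] : ℝ≥0∞ :=
  ⨆ (α : Finset (Set X)) (_ : IsFinOpenCover α), (Dcover α : ℝ≥0∞)

/-- Stable topological dimension `stabdim X = lim_n dim(X^n)/n = inf_n dim(X^n)/n`. -/
noncomputable def stabdim (X : Type*) [TopologicalSpace X] : ℝ≥0∞ :=
  ⨅ n : ℕ, covDim (Fin (n + 1) → X) / ((n : ℝ≥0∞) + 1)

end MeanDimDefs
section NatExtDefs

variable {X : Type*}

/-- The natural extension space `X̃_T ⊆ X^ℕ`. -/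
def natExtSet (T : X → X) : Set (ℕ → X) := {x | ∀ k, T (x (k + 1)) = x k}

/-- The natural extension map `T̃ : (x_k)_k ↦ (T x_0, x_0, x_1, …)`. -/
def natExtMap (T : X → X) : ↥(natExtSet T) → ↥(natExtSet T) := fun x =>
  ⟨fun k => Nat.rec (T (x.1 0)) (fun k _ => x.1 k) k, by
    intro k
    cases k with
    | zero => rfl
    | succ k => exact x.2 k⟩

end NatExtDefs
section MetricMeanDimDefs

open Filter

variable {Z : Type*}

/-- Maximal cardinality of an `(n,ε)`-separated set for the distance function `ρ`
and the map `F`. -/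
noncomputable def sepNum (ρ : Z → Z → ℝ) (F : Z → Z) (n : ℕ) (ε : ℝ) : ℕ :=
  sSup {m : ℕ | ∃ E : Finset Z, E.card = m ∧
    ∀ x ∈ E, ∀ y ∈ E, x ≠ y → ∃ i < n, ε < ρ (F^[i] x) (F^[i] y)}

/-- `h_ρ(F, ε) = limsup_n (1/n) log s_n(ρ, F, ε)`. -/
noncomputable def sepEntropy (ρ : Z → Z → ℝ) (F : Z → Z) (ε : ℝ) : ℝ :=
  limsup (fun n : ℕ => Real.log (sepNum ρ F n ε) / n) atTop

/-- Upper metric mean dimension `limsup_{ε→0⁺} h_ρ(F,ε)/log(1/ε)`. -/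
noncomputable def upperMMDim (ρ : Z → Z → ℝ) (F : Z → Z) : ℝ :=
  limsup (fun ε : ℝ => sepEntropy ρ F ε / Real.log (1 / ε)) (nhdsWithin 0 (Set.Ioi 0))

/-- Lower metric mean dimension `liminf_{ε→0⁺} h_ρ(F,ε)/log(1/ε)`. -/
noncomputable def lowerMMDim (ρ : Z → Z → ℝ) (F : Z → Z) : ℝ :=
  liminf (fun ε : ℝ => sepEntropy ρ F ε / Real.log (1 / ε)) (nhdsWithin 0 (Set.Ioi 0))

end MetricMeanDimDefs


open Filter

section AuxAll

section Master
variable {α : Type*} (l : Filter α) [l.NeBot]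

lemma evtransfer {m : α → α} (hm : Filter.map m l = l) (P : α → Prop) :
    (∀ᶠ x in l, P x) ↔ (∀ᶠ x in l, P (m x)) := by
  conv_lhs => rw [← hm]
  exact Filter.eventually_map

lemma ub_nonneg {A : α → ℝ} (hA0 : ∀ᶠ x in l, 0 ≤ A x) :
    ∀ a ∈ {a : ℝ | ∀ᶠ x in l, A x ≤ a}, (0:ℝ) ≤ a := by
  intro a ha
  rcases (hA0.and ha).exists with ⟨x, hx1, hx2⟩
  linarith

/-- abstract step : if multiplying members of `S` by `1+η` lands in `T`, then `sInf T ≤ sInf S`. -/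
lemma sInf_step (S T : Set ℝ) (hS : S.Nonempty) (hbT : BddBelow T)
    (hTn : ∀ a ∈ T, (0:ℝ) ≤ a)
    (hmem : ∀ η : ℝ, 0 < η → ∀ a ∈ S, (1 + η) * a ∈ T)
    (hSn : ∀ a ∈ S, (0:ℝ) ≤ a) :
    sInf T ≤ sInf S := by
  refine le_of_forall_pos_le_add (fun ζ hζ => ?_)
  have hinfS : (0:ℝ) ≤ sInf S := Real.sInf_nonneg hSn
  set η := ζ / (sInf S + 1) with hn
  have hηpos : 0 < η := div_pos hζ (by linarith)
  have key : sInf T ≤ (1 + η) * sInf S := by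
    have h1 : sInf T / (1 + η) ≤ sInf S := by
      refine le_csInf hS (fun a ha => ?_)
      have : sInf T ≤ (1 + η) * a := csInf_le hbT (hmem η hηpos a ha)
      rw [div_le_iff₀ (by linarith)]
      linarith [mul_comm (1+η) a]
    calc sInf T = (sInf T / (1 + η)) * (1 + η) := by field_simp
      _ ≤ sInf S * (1 + η) := by nlinarith [Real.sInf_nonneg hTn, div_nonneg (Real.sInf_nonneg hTn) (le_of_lt (by linarith : (0:ℝ) < 1+η))]
      _ = (1 + η) * sInf S := by ring
  have h2 : η * (sInf S + 1) = ζ := by rw [hn]; exact div_mul_cancel₀ _ (ne_of_gt (by linarith))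
  nlinarith

/-- abstract step for sSup-sets. -/
lemma sSup_step (S T : Set ℝ) (hT : T.Nonempty) (hbS : BddAbove S) (hS : S.Nonempty)
    (h0S : (0:ℝ) ≤ sSup S)
    (hmem : ∀ η : ℝ, 0 < η → ∀ a ∈ T, a / (1 + η) ∈ S) :
    sSup T ≤ sSup S := by
  refine le_of_forall_pos_le_add (fun ζ hζ => ?_)
  set η := ζ / (sSup S + 1) with hn
  have hηpos : 0 < η := div_pos hζ (by linarith)
  have key : sSup T ≤ (1 + η) * sSup S := by
    refine csSup_le hT (fun a ha => ?_)
    have h1 : a / (1 + η) ≤ sSup S := le_csSup hbS (hmem η hηpos a ha)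
    rw [div_le_iff₀ (by linarith)] at h1
    linarith [mul_comm (sSup S) (1 + η)]
  have h2 : η * (sSup S + 1) = ζ := by rw [hn]; exact div_mul_cancel₀ _ (ne_of_gt (by linarith))
  nlinarith

lemma master_limsup_liminf {A B : α → ℝ} {m1 m2 : α → α}
    (hm1 : Filter.map m1 l = l) (hm2 : Filter.map m2 l = l)
    (hA0 : ∀ᶠ x in l, 0 ≤ A x) (hB0 : ∀ᶠ x in l, 0 ≤ B x)
    (h1 : ∀ η : ℝ, 0 < η → ∀ᶠ x in l, B x ≤ (1 + η) * A (m1 x))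
    (h2 : ∀ η : ℝ, 0 < η → ∀ᶠ x in l, A x ≤ (1 + η) * B (m2 x)) :
    limsup B l = limsup A l ∧ liminf B l = liminf A l := by
  set UA : Set ℝ := {a | ∀ᶠ x in l, A x ≤ a} with hUA
  set UB : Set ℝ := {a | ∀ᶠ x in l, B x ≤ a} with hUB
  set LA : Set ℝ := {a | ∀ᶠ x in l, a ≤ A x} with hLA
  set LB : Set ℝ := {a | ∀ᶠ x in l, a ≤ B x} with hLB
  have hUAn : ∀ a ∈ UA, (0:ℝ) ≤ a := ub_nonneg l hA0
  have hUBn : ∀ a ∈ UB, (0:ℝ) ≤ a := ub_nonneg l hB0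
  have memUA : ∀ η : ℝ, 0 < η → ∀ a ∈ UA, (1 + η) * a ∈ UB := by
    intro η hη a ha
    have ha' : ∀ᶠ x in l, A (m1 x) ≤ a := (evtransfer l hm1 (fun y => A y ≤ a)).1 ha
    have ha0 : 0 ≤ a := hUAn a ha
    filter_upwards [h1 η hη, ha'] with x hx1 hx2
    calc B x ≤ (1 + η) * A (m1 x) := hx1
      _ ≤ (1 + η) * a := by nlinarith
  have memUB : ∀ η : ℝ, 0 < η → ∀ a ∈ UB, (1 + η) * a ∈ UA := by
    intro η hη a ha
    have ha' : ∀ᶠ x in l, B (m2 x) ≤ a := (evtransfer l hm2 (fun y => B y ≤ a)).1 ha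
    have ha0 : 0 ≤ a := hUBn a ha
    filter_upwards [h2 η hη, ha'] with x hx1 hx2
    calc A x ≤ (1 + η) * B (m2 x) := hx1
      _ ≤ (1 + η) * a := by nlinarith
  have memLB : ∀ η : ℝ, 0 < η → ∀ a ∈ LB, a / (1 + η) ∈ LA := by
    intro η hη a ha
    have key : ∀ᶠ x in l, a / (1 + η) ≤ A (m1 x) := by
      filter_upwards [h1 η hη, ha] with x hx1 hx2
      rw [div_le_iff₀ (by linarith)]
      nlinarith
    exact (evtransfer l hm1 (fun y => a / (1+η) ≤ A y)).2 key
  have memLA : ∀ η : ℝ, 0 < η → ∀ a ∈ LA, a / (1 + η) ∈ LB := by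
    intro η hη a ha
    have key : ∀ᶠ x in l, a / (1 + η) ≤ B (m2 x) := by
      filter_upwards [h2 η hη, ha] with x hx1 hx2
      rw [div_le_iff₀ (by linarith)]
      nlinarith
    exact (evtransfer l hm2 (fun y => a / (1+η) ≤ B y)).2 key
  have h0LA : (0:ℝ) ∈ LA := hA0
  have h0LB : (0:ℝ) ∈ LB := hB0
  constructor
  · rw [Filter.limsup_eq, Filter.limsup_eq]
    by_cases hUAne : UA.Nonempty
    · have hUBne : UB.Nonempty := ⟨(1+1)*_, memUA 1 one_pos _ hUAne.choose_spec⟩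
      exact le_antisymm
        (sInf_step UA UB hUAne ⟨0, hUBn⟩ hUBn memUA hUAn)
        (sInf_step UB UA hUBne ⟨0, hUAn⟩ hUAn memUB hUBn)
    · have hUBe : ¬ UB.Nonempty := by
        rintro ⟨b, hb⟩
        exact hUAne ⟨(1+1)*b, memUB 1 one_pos b hb⟩
      rw [Set.not_nonempty_iff_eq_empty] at hUAne hUBe
      show sInf UB = sInf UA
      rw [hUAne, hUBe]
  · rw [Filter.liminf_eq, Filter.liminf_eq]
    by_cases hLAb : BddAbove LA
    · have hLBb : BddAbove LB := by
        obtain ⟨M, hM⟩ := hLAb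
        refine ⟨2 * M, fun b hb => ?_⟩
        have : b / (1 + 1) ∈ LA := memLB 1 one_pos b hb
        have := hM this
        linarith
      have h0A : (0:ℝ) ≤ sSup LA := le_csSup hLAb h0LA
      have h0B : (0:ℝ) ≤ sSup LB := le_csSup hLBb h0LB
      exact le_antisymm
        (sSup_step LA LB ⟨0, h0LB⟩ hLAb ⟨0, h0LA⟩ h0A memLB)
        (sSup_step LB LA ⟨0, h0LA⟩ hLBb ⟨0, h0LB⟩ h0B memLA)
    · have hLBb : ¬ BddAbove LB := by
        rintro ⟨M, hM⟩
        refine hLAb ⟨2 * max M 0, fun a ha => ?_⟩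
        have : a / (1+1) ∈ LB := memLA 1 one_pos a ha
        have := hM this
        have := le_max_left M (0:ℝ)
        linarith
      show sSup LB = sSup LA
      rw [Real.sSup_of_not_bddAbove hLAb, Real.sSup_of_not_bddAbove hLBb]

end Master
section Sep
open Filter
variable {Z : Type*} (ρ : Z → Z → ℝ) (F : Z → Z)

def sepSet (n : ℕ) (ε : ℝ) : Set ℕ :=
  {m : ℕ | ∃ E : Finset Z, E.card = m ∧
    ∀ x ∈ E, ∀ y ∈ E, x ≠ y → ∃ i < n, ε < ρ (F^[i] x) (F^[i] y)}

lemma sepNum_def (n : ℕ) (ε : ℝ) : sepNum ρ F n ε = sSup (sepSet ρ F n ε) := rfl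

lemma zero_mem_sepSet (n : ℕ) (ε : ℝ) : 0 ∈ sepSet ρ F n ε :=
  ⟨∅, by simp, by simp⟩

lemma one_mem_sepSet (z : Z) (n : ℕ) (ε : ℝ) : 1 ∈ sepSet ρ F n ε :=
  ⟨{z}, by simp, by
    intro x hx y hy hxy
    simp only [Finset.mem_singleton] at hx hy
    exact absurd (hx.trans hy.symm) hxy⟩

lemma sepSet_card_le {γ : Type*} [Fintype γ] (t : Z → γ)
    {ε : ℝ} (ht : ∀ u v, t u = t v → ¬ ε < ρ u v) (n : ℕ) :
    ∀ m ∈ sepSet ρ F n ε, m ≤ Fintype.card γ ^ n := by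
  rintro m ⟨E, hcard, hsep⟩
  classical
  set e : Z → (Fin n → γ) := fun x i => t (F^[i.1] x) with he
  have hinj : Set.InjOn e E := by
    intro x hx y hy hxy
    by_contra hne
    obtain ⟨i, hi, hlt⟩ := hsep x hx y hy hne
    exact ht _ _ (congrFun hxy ⟨i, hi⟩) hlt
  calc m = E.card := hcard.symm
    _ = (E.image e).card := (Finset.card_image_of_injOn hinj).symm
    _ ≤ Fintype.card (Fin n → γ) := Finset.card_le_univ _
    _ = Fintype.card γ ^ n := by simp [Fintype.card_fun]

lemma sepSet_bddAbove {γ : Type*} [Fintype γ] (t : Z → γ)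
    {ε : ℝ} (ht : ∀ u v, t u = t v → ¬ ε < ρ u v) (n : ℕ) :
    BddAbove (sepSet ρ F n ε) :=
  ⟨Fintype.card γ ^ n, fun m hm => sepSet_card_le ρ F t ht n m hm⟩

lemma sepNum_le_pow {γ : Type*} [Fintype γ] (t : Z → γ)
    {ε : ℝ} (ht : ∀ u v, t u = t v → ¬ ε < ρ u v) (n : ℕ) :
    sepNum ρ F n ε ≤ Fintype.card γ ^ n :=
  csSup_le ⟨0, zero_mem_sepSet ρ F n ε⟩ (sepSet_card_le ρ F t ht n)

lemma one_le_sepNum [Nonempty Z] {n : ℕ} {ε : ℝ} (hb : BddAbove (sepSet ρ F n ε)) :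
    1 ≤ sepNum ρ F n ε :=
  le_csSup hb (one_mem_sepSet ρ F (Classical.arbitrary Z) n ε)

lemma sepNum_le_sepNum {Z' : Type*} (ρ' : Z' → Z' → ℝ) (F' : Z' → Z') {n n' : ℕ} {ε ε' : ℝ}
    (hsub : sepSet ρ F n ε ⊆ sepSet ρ' F' n' ε') (hb : BddAbove (sepSet ρ' F' n' ε')) :
    sepNum ρ F n ε ≤ sepNum ρ' F' n' ε' :=
  csSup_le_csSup hb ⟨0, zero_mem_sepSet ρ F n ε⟩ hsub

/-- subadditivity: `s_{n+k}(ε) ≤ s_n(ε) * M^k` where `M` is the size of an `ε`-net. -/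
lemma sepSet_card_le_subadd {γ : Type*} [Fintype γ] (t : Z → γ)
    {ε : ℝ} (ht : ∀ u v, t u = t v → ¬ ε < ρ u v) (n k : ℕ) :
    ∀ m ∈ sepSet ρ F (n + k) ε, m ≤ sepNum ρ F n ε * Fintype.card γ ^ k := by
  rintro m ⟨E, hcard, hsep⟩
  classical
  set τ : Z → (Fin k → γ) := fun x i => t (F^[n + i.1] x) with hτ
  have hfib : ∀ b : Fin k → γ, (E.filter fun x => τ x = b).card ∈ sepSet ρ F n ε := by
    intro b
    refine ⟨E.filter fun x => τ x = b, rfl, ?_⟩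
    intro x hx y hy hxy
    rw [Finset.mem_filter] at hx hy
    obtain ⟨i, hi, hlt⟩ := hsep x hx.1 y hy.1 hxy
    rcases lt_or_ge i n with hin | hin
    · exact ⟨i, hin, hlt⟩
    · exfalso
      have hik : i - n < k := by omega
      have : τ x ⟨i - n, hik⟩ = τ y ⟨i - n, hik⟩ := by rw [hx.2, hy.2]
      simp only [hτ] at this
      rw [show n + (i - n) = i by omega] at this
      exact ht _ _ this hlt
  have hbdd : BddAbove (sepSet ρ F n ε) := sepSet_bddAbove ρ F t ht n
  calc m = E.card := hcard.symm
    _ = ∑ b : Fin k → γ, (E.filter fun x => τ x = b).card :=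
        Finset.card_eq_sum_card_fiberwise (fun x _ => Finset.mem_univ (τ x))
    _ ≤ (Finset.univ : Finset (Fin k → γ)).card • sepNum ρ F n ε :=
        Finset.sum_le_card_nsmul _ _ _ (fun b _ => le_csSup hbdd (hfib b))
    _ = sepNum ρ F n ε * Fintype.card γ ^ k := by
        simp [Finset.card_univ, Fintype.card_fun, smul_eq_mul, mul_comm]

end Sep
section Nat2
variable {X : Type*} (T : X → X)


lemma natext_back (x : ↥(natExtSet T)) (j m : ℕ) : x.1 j = T^[m] (x.1 (j + m)) := by
  induction m with
  | zero => rfl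
  | succ m ih =>
    rw [ih, Function.iterate_succ_apply]
    congr 1
    exact (x.2 (j + m)).symm

lemma natext_map_zero (x : ↥(natExtSet T)) : (natExtMap T x).1 0 = T (x.1 0) := rfl

lemma natext_map_succ (x : ↥(natExtSet T)) (j : ℕ) : (natExtMap T x).1 (j + 1) = x.1 j := rfl

lemma natext_coord (x : ↥(natExtSet T)) (i k : ℕ) :
    ∀ j ≤ k, ((natExtMap T)^[i] x).1 j = T^[i + k - j] (x.1 k) := by
  induction i with
  | zero =>
    intro j hj
    simp only [Function.iterate_zero, id_eq]
    have h1 : j + (k - j) = k := by omega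
    have h2 : 0 + k - j = k - j := by omega
    rw [natext_back T x j (k - j), h1, h2]
  | succ i ih =>
    intro j hj
    rw [Function.iterate_succ_apply']
    cases j with
    | zero =>
      rw [natext_map_zero, ih 0 (Nat.zero_le k)]
      have h1 : i + 1 + k - 0 = (i + k - 0) + 1 := by omega
      rw [h1, Function.iterate_succ_apply']
    | succ j =>
      rw [natext_map_succ, ih j (by omega)]
      congr 1
      omega

/-- a section of the projection `x ↦ x 0`. -/
noncomputable def natSec (hTs : Function.Surjective T) (x : X) : ↥(natExtSet T) :=
  ⟨fun m => (Function.surjInv hTs)^[m] x, by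
    intro k
    show T ((Function.surjInv hTs)^[k+1] x) = (Function.surjInv hTs)^[k] x
    rw [Function.iterate_succ_apply']
    exact Function.surjInv_eq hTs _⟩

lemma natSec_zero (hTs : Function.Surjective T) (x : X) : (natSec T hTs x).1 0 = x := rfl

lemma natSec_injective (hTs : Function.Surjective T) : Function.Injective (natSec T hTs) :=
  fun x y h => congrArg (fun z : ↥(natExtSet T) => z.1 0) h

end Nat2
section Net

/-- finite net at scale ε : a map to a finite type identifying only ε-close points. -/
lemma exists_net {X : Type u} [MetricSpace X] [CompactSpace X] (ε : ℝ) (hε : 0 < ε) :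
    ∃ (γ : Type u) (_ : Fintype γ) (t : X → γ), ∀ u v : X, t u = t v → dist u v ≤ ε := by
  have htb : TotallyBounded (Set.univ : Set X) := isCompact_univ.totallyBounded
  rcases Metric.totallyBounded_iff.1 htb (ε / 2) (by positivity) with ⟨s, hsf, hcov⟩
  haveI := hsf.fintype
  have hex : ∀ u : X, ∃ y : s, dist u (y : X) < ε / 2 := by
    intro u
    have := hcov (Set.mem_univ u)
    simp only [Set.mem_iUnion, Metric.mem_ball] at this
    obtain ⟨y, hy, hlt⟩ := this
    exact ⟨⟨y, hy⟩, hlt⟩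
  refine ⟨↥s, inferInstance, fun u => (hex u).choose, fun u v h => ?_⟩
  have h1 := (hex u).choose_spec
  have h2 := (hex v).choose_spec
  have h' : (hex u).choose = (hex v).choose := h
  rw [h'] at h1
  calc dist u v ≤ dist u ((hex v).choose : X) + dist v ((hex v).choose : X) := dist_triangle_right u v _
    _ ≤ ε / 2 + ε / 2 := by linarith
    _ = ε := by ring

end Net

section FilterMap

lemma map_mul_nhdsWithin {a : ℝ} (ha : 0 < a) :
    Filter.map (fun ε : ℝ => a * ε) (nhdsWithin 0 (Set.Ioi 0)) = nhdsWithin 0 (Set.Ioi 0) := by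
  have key : ∀ b : ℝ, 0 < b →
      Filter.map (fun ε : ℝ => b * ε) (nhdsWithin 0 (Set.Ioi 0)) ≤ nhdsWithin 0 (Set.Ioi 0) := by
    intro b hb
    rw [Filter.map_le_iff_le_comap, ← Filter.tendsto_iff_comap]
    rw [tendsto_nhdsWithin_iff]
    constructor
    · have : Filter.Tendsto (fun ε : ℝ => b * ε) (nhds 0) (nhds (b * 0)) :=
        (continuous_const.mul continuous_id).tendsto 0
      rw [mul_zero] at this
      exact this.mono_left nhdsWithin_le_nhds
    · filter_upwards [self_mem_nhdsWithin] with x hx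
      exact mul_pos hb hx
  refine le_antisymm (key a ha) ?_
  have h2 := key a⁻¹ (by positivity)
  have : Filter.map (fun ε : ℝ => a * ε) (Filter.map (fun ε : ℝ => a⁻¹ * ε) (nhdsWithin 0 (Set.Ioi 0)))
      = nhdsWithin 0 (Set.Ioi 0) := by
    rw [Filter.map_map]
    have : ((fun ε : ℝ => a * ε) ∘ (fun ε : ℝ => a⁻¹ * ε)) = id := by
      funext x
      simp [Function.comp, ← mul_assoc, mul_inv_cancel₀ (ne_of_gt ha)]
    rw [this, Filter.map_id]
  calc nhdsWithin 0 (Set.Ioi 0)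
      = Filter.map (fun ε : ℝ => a * ε) (Filter.map (fun ε : ℝ => a⁻¹ * ε) (nhdsWithin 0 (Set.Ioi 0))) := this.symm
    _ ≤ Filter.map (fun ε : ℝ => a * ε) (nhdsWithin 0 (Set.Ioi 0)) := Filter.map_mono h2

lemma tendsto_log_one_div :
    Filter.Tendsto (fun ε : ℝ => Real.log (1 / ε)) (nhdsWithin 0 (Set.Ioi 0)) Filter.atTop := by
  rw [← Filter.tendsto_neg_atBot_iff]
  have : (fun ε : ℝ => -Real.log (1 / ε)) = fun ε : ℝ => Real.log ε := by
    funext ε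
    rw [one_div, Real.log_inv, neg_neg]
  rw [this]
  exact Real.tendsto_log_nhdsGT_zero

end FilterMap

section LimsupHelp
open Filter

lemma limsup_nonneg' {α : Type*} (l : Filter α) [l.NeBot] {u : α → ℝ}
    (h : ∀ᶠ x in l, 0 ≤ u x) : 0 ≤ limsup u l := by
  rw [Filter.limsup_eq]
  refine Real.sInf_nonneg (fun a ha => ?_)
  rcases (h.and ha).exists with ⟨x, h1, h2⟩
  linarith

lemma limsup_le_of_le_add {u v w : ℕ → ℝ} (hu0 : ∀ n, 0 ≤ u n)
    (h : ∀ n, u n ≤ v n + w n) (hw : Filter.Tendsto w atTop (nhds 0))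
    (hM : ∃ M : ℝ, ∀ n, v n ≤ M) :
    limsup u atTop ≤ limsup v atTop := by
  rw [Filter.limsup_eq, Filter.limsup_eq]
  obtain ⟨M, hMv⟩ := hM
  have hVne : ∃ a : ℝ, a ∈ {a | ∀ᶠ n in atTop, v n ≤ a} := ⟨M, Filter.Eventually.of_forall hMv⟩
  refine le_csInf hVne (fun a ha => ?_)
  refine le_of_forall_pos_le_add (fun ζ hζ => ?_)
  have hub : ∀ b ∈ {b : ℝ | ∀ᶠ n in atTop, u n ≤ b}, (0:ℝ) ≤ b := by
    intro b hb
    rcases hb.exists with ⟨n, hn⟩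
    linarith [hu0 n]
  have hwev : ∀ᶠ n in atTop, w n < ζ := Filter.Tendsto.eventually_lt_const hζ hw
  have hmem : a + ζ ∈ {b : ℝ | ∀ᶠ n in atTop, u n ≤ b} := by
    filter_upwards [ha, hwev] with n h1 h2
    calc u n ≤ v n + w n := h n
      _ ≤ a + ζ := by linarith
  exact csInf_le ⟨0, hub⟩ hmem

end LimsupHelp
section Counting
variable {X : Type u} [MetricSpace X] [CompactSpace X] (T : X → X) (δ : ℕ → ℝ)

/-- the product "metric" on the natural extension. -/
noncomputable abbrev prodRho : ↥(natExtSet T) → ↥(natExtSet T) → ℝ :=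
  fun x y => ⨆ i : ℕ, δ i * dist (x.1 i) (y.1 i)

variable {D c : ℝ}

lemma prodRho_bddAbove (hD : ∀ x y : X, dist x y ≤ D) (hc0 : 0 < c) (hcδ : ∀ i, δ i ≤ c)
    (x y : ↥(natExtSet T)) :
    BddAbove (Set.range fun i => δ i * dist (x.1 i) (y.1 i)) := by
  refine ⟨c * D, ?_⟩
  rintro r ⟨i, rfl⟩
  exact mul_le_mul (hcδ i) (hD _ _) dist_nonneg hc0.le

/-- net on the natural extension. -/
lemma exists_net_ext (hD0 : 0 ≤ D) (hD : ∀ x y : X, dist x y ≤ D) (hc0 : 0 < c) (hcδ : ∀ i, δ i ≤ c)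
    (ε : ℝ) (hε : 0 < ε) {k : ℕ} (hk : ∀ i ≥ k, δ i < ε / (D + 1)) :
    ∃ (γ : Type u) (_ : Fintype γ) (t : ↥(natExtSet T) → γ),
      ∀ u v, t u = t v → prodRho T δ u v ≤ ε := by
  obtain ⟨γ₀, inst₀, t₀, ht₀⟩ := exists_net (X := X) (ε / c) (by positivity)
  refine ⟨Fin k → γ₀, inferInstance, fun u => fun j => t₀ (u.1 j.1), fun u v h => ?_⟩
  refine ciSup_le (fun i => ?_)
  rcases lt_or_ge i k with hik | hik
  · have hco : dist (u.1 i) (v.1 i) ≤ ε / c := ht₀ _ _ (congrFun h ⟨i, hik⟩)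
    calc δ i * dist (u.1 i) (v.1 i) ≤ c * (ε / c) :=
          mul_le_mul (hcδ i) hco dist_nonneg hc0.le
      _ = ε := by field_simp
  · calc δ i * dist (u.1 i) (v.1 i) ≤ (ε / (D + 1)) * D :=
        mul_le_mul (le_of_lt (hk i hik)) (hD _ _) dist_nonneg (le_of_lt (div_pos hε (by linarith)))
      _ ≤ ε := by
          rw [div_mul_eq_mul_div, div_le_iff₀ (by linarith)]
          nlinarith

/-- counting inequality (I): lifting separated sets via a section. -/
lemma sepSet_incl_one (hD : ∀ x y : X, dist x y ≤ D) (hc0 : 0 < c) (hcδ : ∀ i, δ i ≤ c)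
    (hδpos : ∀ i, 0 < δ i) (hTs : Function.Surjective T) (ε : ℝ) (n : ℕ) :
    sepSet (fun x y : X => dist x y) T n ε ⊆ sepSet (prodRho T δ) (natExtMap T) n (δ 0 * ε) := by
  classical
  rintro m ⟨E, hcard, hsep⟩
  refine ⟨E.image (natSec T hTs), by
    rw [Finset.card_image_of_injective _ (natSec_injective T hTs)]; exact hcard, ?_⟩
  intro u hu v hv huv
  rw [Finset.mem_image] at hu hv
  obtain ⟨a, ha, rfl⟩ := hu
  obtain ⟨b, hb, rfl⟩ := hv
  have hab : a ≠ b := fun hh => huv (by rw [hh])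
  obtain ⟨i, hi, hlt⟩ := hsep a ha b hb hab
  refine ⟨i, hi, ?_⟩
  have h0a : ((natExtMap T)^[i] (natSec T hTs a)).1 0 = T^[i] a := by
    have := natext_coord T (natSec T hTs a) i 0 0 (le_refl 0)
    simpa [natSec_zero] using this
  have h0b : ((natExtMap T)^[i] (natSec T hTs b)).1 0 = T^[i] b := by
    have := natext_coord T (natSec T hTs b) i 0 0 (le_refl 0)
    simpa [natSec_zero] using this
  calc δ 0 * ε < δ 0 * dist (T^[i] a) (T^[i] b) := by
        exact mul_lt_mul_of_pos_left hlt (hδpos 0)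
    _ = δ 0 * dist (((natExtMap T)^[i] (natSec T hTs a)).1 0)
          (((natExtMap T)^[i] (natSec T hTs b)).1 0) := by rw [h0a, h0b]
    _ ≤ prodRho T δ ((natExtMap T)^[i] (natSec T hTs a)) ((natExtMap T)^[i] (natSec T hTs b)) :=
        le_ciSup (prodRho_bddAbove T δ hD hc0 hcδ _ _) 0

/-- counting inequality (II): projecting separated sets to the `k`-th coordinate. -/
lemma sepSet_incl_two (hD0 : 0 ≤ D) (hD : ∀ x y : X, dist x y ≤ D) (hc0 : 0 < c) (hcδ : ∀ i, δ i ≤ c)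
    (ε : ℝ) (hε : 0 < ε) (n : ℕ) {k : ℕ}
    (hk : ∀ i ≥ k, δ i < ε / (D + 1)) :
    sepSet (prodRho T δ) (natExtMap T) n ε ⊆ sepSet (fun x y : X => dist x y) T (n + k) (ε / c) := by
  classical
  rintro m ⟨E, hcard, hsep⟩
  have key : ∀ x ∈ E, ∀ y ∈ E, x ≠ y → ∃ i < n, ∃ j < k,
      ε < δ j * dist (((natExtMap T)^[i] x).1 j) (((natExtMap T)^[i] y).1 j) := by
    intro x hx y hy hxy
    obtain ⟨i, hi, hlt⟩ := hsep x hx y hy hxy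
    obtain ⟨j, hj⟩ := (lt_ciSup_iff (prodRho_bddAbove T δ hD hc0 hcδ _ _)).1 hlt
    refine ⟨i, hi, j, ?_, hj⟩
    by_contra hcon
    push_neg at hcon
    have : δ j * dist (((natExtMap T)^[i] x).1 j) (((natExtMap T)^[i] y).1 j)
        ≤ (ε / (D + 1)) * D :=
      mul_le_mul (le_of_lt (hk j hcon)) (hD _ _) dist_nonneg (le_of_lt (div_pos hε (by linarith)))
    have h2 : (ε / (D + 1)) * D ≤ ε := by
      rw [div_mul_eq_mul_div, div_le_iff₀ (by linarith)]
      nlinarith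
    linarith
  have hinj : Set.InjOn (fun x : ↥(natExtSet T) => x.1 k) E := by
    intro x hx y hy hxy
    by_contra hne
    obtain ⟨i, hi, j, hjk, hlt⟩ := key x hx y hy hne
    have hxy' : x.1 k = y.1 k := hxy
    rw [natext_coord T x i k j (le_of_lt hjk), natext_coord T y i k j (le_of_lt hjk), hxy'] at hlt
    simp only [dist_self, mul_zero] at hlt
    linarith
  refine ⟨E.image (fun x => x.1 k), by rw [Finset.card_image_of_injOn hinj]; exact hcard, ?_⟩
  intro u hu v hv huv
  rw [Finset.mem_image] at hu hv
  obtain ⟨x, hx, rfl⟩ := hu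
  obtain ⟨y, hy, rfl⟩ := hv
  have hxy : x ≠ y := fun hh => huv (by rw [hh])
  obtain ⟨i, hi, j, hjk, hlt⟩ := key x hx y hy hxy
  rw [natext_coord T x i k j (le_of_lt hjk), natext_coord T y i k j (le_of_lt hjk)] at hlt
  refine ⟨i + k - j, by omega, ?_⟩
  rw [div_lt_iff₀ hc0]
  have : δ j * dist (T^[i + k - j] (x.1 k)) (T^[i + k - j] (y.1 k))
      ≤ c * dist (T^[i + k - j] (x.1 k)) (T^[i + k - j] (y.1 k)) :=
    mul_le_mul_of_nonneg_right (hcδ j) dist_nonneg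
  calc ε < δ j * dist (T^[i+k-j] (x.1 k)) (T^[i+k-j] (y.1 k)) := hlt
    _ ≤ c * dist (T^[i+k-j] (x.1 k)) (T^[i+k-j] (y.1 k)) := this
    _ = dist (T^[i+k-j] (x.1 k)) (T^[i+k-j] (y.1 k)) * c := mul_comm _ _

end Counting


section Entropy
variable {Z : Type*} (ρ : Z → Z → ℝ) (F : Z → Z)

lemma entropy_term_nonneg [Nonempty Z] {n : ℕ} {ε : ℝ} (hb : BddAbove (sepSet ρ F n ε)) :
    0 ≤ Real.log (sepNum ρ F n ε) / (n : ℝ) :=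
  div_nonneg (Real.log_nonneg (by exact_mod_cast one_le_sepNum ρ F hb)) (Nat.cast_nonneg n)

lemma sepEntropy_nonneg [Nonempty Z] {ε : ℝ} (hb : ∀ n, BddAbove (sepSet ρ F n ε)) :
    0 ≤ sepEntropy ρ F ε :=
  limsup_nonneg' atTop (Filter.Eventually.of_forall fun n => entropy_term_nonneg ρ F (hb n))

lemma term_le_log_card [Nonempty Z] {γ : Type*} [Fintype γ] [Nonempty γ] (t : Z → γ)
    {ε : ℝ} (ht : ∀ u v, t u = t v → ¬ ε < ρ u v) (n : ℕ) :
    Real.log (sepNum ρ F n ε) / (n : ℝ) ≤ Real.log (Fintype.card γ) := by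
  have hM1 : 1 ≤ Fintype.card γ := Fintype.card_pos
  have hlogM : 0 ≤ Real.log (Fintype.card γ) := Real.log_nonneg (by exact_mod_cast hM1)
  cases n with
  | zero => simpa using hlogM
  | succ n =>
    have hpos : (0:ℝ) < ((n:ℕ) + 1 : ℕ) := by positivity
    rw [div_le_iff₀ hpos]
    have h1 : (1:ℕ) ≤ sepNum ρ F (n+1) ε := one_le_sepNum ρ F (sepSet_bddAbove ρ F t ht _)
    have h2 : sepNum ρ F (n+1) ε ≤ Fintype.card γ ^ (n+1) := sepNum_le_pow ρ F t ht _
    calc Real.log (sepNum ρ F (n+1) ε)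
        ≤ Real.log ((Fintype.card γ ^ (n+1) : ℕ)) :=
          Real.log_le_log (by exact_mod_cast h1) (by exact_mod_cast h2)
      _ = Real.log (((Fintype.card γ : ℝ)) ^ (n+1)) := by norm_cast
      _ = ((n+1 : ℕ) : ℝ) * Real.log (Fintype.card γ) := by rw [Real.log_pow]
      _ = Real.log (Fintype.card γ) * ((n:ℕ) + 1 : ℕ) := by push_cast; ring

lemma sepNum_of_isEmpty [IsEmpty Z] (n : ℕ) (ε : ℝ) : sepNum ρ F n ε = 0 := by
  have h : sepSet ρ F n ε = {0} := by
    ext m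
    constructor
    · rintro ⟨E, hc, -⟩
      have : E = ∅ := Finset.eq_empty_of_isEmpty E
      simp [← hc, this]
    · rintro rfl
      exact zero_mem_sepSet ρ F n ε
  show sSup (sepSet ρ F n ε) = 0
  rw [h]
  exact csSup_singleton 0

lemma sepEntropy_of_isEmpty [IsEmpty Z] (ε : ℝ) : sepEntropy ρ F ε = 0 := by
  unfold sepEntropy
  have h : (fun n : ℕ => Real.log (sepNum ρ F n ε) / (n : ℝ)) = fun _ => (0:ℝ) := by
    funext n
    rw [sepNum_of_isEmpty]
    simp
  rw [h]
  exact limsup_const 0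

lemma upperMMDim_of_isEmpty [IsEmpty Z] : upperMMDim ρ F = 0 := by
  unfold upperMMDim
  have h : (fun ε : ℝ => sepEntropy ρ F ε / Real.log (1/ε)) = fun _ => (0:ℝ) := by
    funext ε
    rw [sepEntropy_of_isEmpty]
    simp
  rw [h]
  exact limsup_const 0

lemma lowerMMDim_of_isEmpty [IsEmpty Z] : lowerMMDim ρ F = 0 := by
  unfold lowerMMDim
  have h : (fun ε : ℝ => sepEntropy ρ F ε / Real.log (1/ε)) = fun _ => (0:ℝ) := by
    funext ε
    rw [sepEntropy_of_isEmpty]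
    simp
  rw [h]
  exact liminf_const 0

end Entropy
end AuxAll

/-- for a surjective system `(X,d,T)` and a product metric
`d_δ(x,y) = sup_i δ_i d(x_i,y_i)` on the natural extension `X̃_T` (with `δ_i > 0`, `δ_i → 0`),
the upper and lower metric mean dimensions of `(X̃_T, T̃, d_δ)` agree with those of
`(X, T, d)`. -/
theorem mmdim_natExt_product_metric {X : Type*} [MetricSpace X] [CompactSpace X]
    (T : X → X) (hT : Continuous T) (hTs : Function.Surjective T)
    (δ : ℕ → ℝ) (hδpos : ∀ i, 0 < δ i) (hδ0 : Filter.Tendsto δ Filter.atTop (nhds 0)) :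
    upperMMDim (fun x y : ↥(natExtSet T) => ⨆ i : ℕ, δ i * dist (x.1 i) (y.1 i))
        (natExtMap T) = upperMMDim (fun x y : X => dist x y) T ∧
      lowerMMDim (fun x y : ↥(natExtSet T) => ⨆ i : ℕ, δ i * dist (x.1 i) (y.1 i))
        (natExtMap T) = lowerMMDim (fun x y : X => dist x y) T := by
  classical
  rcases isEmpty_or_nonempty X with hemp | hne
  · haveI : IsEmpty ↥(natExtSet T) := ⟨fun x => IsEmpty.elim hemp (x.1 0)⟩
    rw [upperMMDim_of_isEmpty, upperMMDim_of_isEmpty, lowerMMDim_of_isEmpty,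
      lowerMMDim_of_isEmpty]
    exact ⟨rfl, rfl⟩
  · -- constants
    obtain ⟨Dr, hDr⟩ := Metric.isBounded_iff.1 (isCompact_univ (X := X)).isBounded
    set D : ℝ := max Dr 0 with hDdef
    have hD0 : 0 ≤ D := le_max_right _ _
    have hD : ∀ x y : X, dist x y ≤ D := fun x y =>
      le_trans (hDr (Set.mem_univ x) (Set.mem_univ y)) (le_max_left _ _)
    obtain ⟨c₀, hc₀⟩ := hδ0.bddAbove_range
    set c : ℝ := max c₀ 1 with hcdef
    have hc0 : (0:ℝ) < c := lt_of_lt_of_le one_pos (le_max_right _ _)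
    have hcδ : ∀ i, δ i ≤ c := fun i =>
      le_trans (hc₀ ⟨i, rfl⟩) (le_max_left _ _)
    haveI : Nonempty ↥(natExtSet T) := ⟨natSec T hTs (Classical.arbitrary X)⟩
    set l := nhdsWithin (0:ℝ) (Set.Ioi 0) with hldef
    set dX : X → X → ℝ := fun x y : X => dist x y with hdX
    set rE : ↥(natExtSet T) → ↥(natExtSet T) → ℝ :=
      fun x y => ⨆ i : ℕ, δ i * dist (x.1 i) (y.1 i) with hrE
    -- bddAbove of sepSets
    have hbX : ∀ ε : ℝ, 0 < ε → ∀ n, BddAbove (sepSet dX T n ε) := by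
      intro ε hε n
      obtain ⟨γ, _, t, ht⟩ := exists_net (X := X) ε hε
      exact sepSet_bddAbove dX T t (fun u v h => not_lt.2 (ht u v h)) n
    have kchoice : ∀ ε : ℝ, 0 < ε → ∃ k : ℕ, ∀ i ≥ k, δ i < ε / (D + 1) := by
      intro ε hε
      exact Filter.eventually_atTop.1
        (Filter.Tendsto.eventually_lt_const (by positivity) hδ0)
    have hbE : ∀ ε : ℝ, 0 < ε → ∀ n, BddAbove (sepSet rE (natExtMap T) n ε) := by
      intro ε hε n
      obtain ⟨k, hk⟩ := kchoice ε hε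
      obtain ⟨γ, _, t, ht⟩ := exists_net_ext T δ hD0 hD hc0 hcδ ε hε hk
      exact sepSet_bddAbove rE (natExtMap T) t (fun u v h => not_lt.2 (ht u v h)) n
    have entX_nonneg : ∀ ε : ℝ, 0 < ε → 0 ≤ sepEntropy dX T ε :=
      fun ε hε => sepEntropy_nonneg dX T (hbX ε hε)
    have entE_nonneg : ∀ ε : ℝ, 0 < ε → 0 ≤ sepEntropy rE (natExtMap T) ε :=
      fun ε hε => sepEntropy_nonneg rE (natExtMap T) (hbE ε hε)
    -- entropy inequality (a)
    have entA : ∀ ε : ℝ, 0 < ε →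
        sepEntropy dX T ε ≤ sepEntropy rE (natExtMap T) (δ 0 * ε) := by
      intro ε hε
      have hδ0ε : 0 < δ 0 * ε := mul_pos (hδpos 0) hε
      have hpt : ∀ n : ℕ, Real.log (sepNum dX T n ε) / (n:ℝ)
          ≤ Real.log (sepNum rE (natExtMap T) n (δ 0 * ε)) / (n:ℝ) + 0 := by
        intro n
        rw [add_zero]
        have hle : sepNum dX T n ε ≤ sepNum rE (natExtMap T) n (δ 0 * ε) :=
          sepNum_le_sepNum dX T rE (natExtMap T)
            (sepSet_incl_one T δ hD hc0 hcδ hδpos hTs ε n) (hbE _ hδ0ε n)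
        have h1 : (1:ℕ) ≤ sepNum dX T n ε := one_le_sepNum dX T (hbX ε hε n)
        cases n with
        | zero => simp
        | succ n =>
          have hpos : (0:ℝ) < ((n + 1 : ℕ) : ℝ) := by positivity
          apply (div_le_div_iff_of_pos_right hpos).2
          refine Real.log_le_log ?_ ?_
          · exact_mod_cast lt_of_lt_of_le one_pos h1
          · exact_mod_cast hle
      obtain ⟨k, hk⟩ := kchoice (δ 0 * ε) hδ0ε
      obtain ⟨γ, instγ, t, ht⟩ := exists_net_ext T δ hD0 hD hc0 hcδ (δ 0 * ε) hδ0ε hk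
      haveI : Nonempty γ := ⟨t (Classical.arbitrary _)⟩
      have hbound := term_le_log_card rE (natExtMap T) t
        (fun u v h => not_lt.2 (ht u v h))
      exact limsup_le_of_le_add
        (fun n => entropy_term_nonneg dX T (hbX ε hε n)) hpt tendsto_const_nhds
        ⟨_, fun n => hbound n⟩
    -- entropy inequality (b)
    have entB : ∀ ε : ℝ, 0 < ε →
        sepEntropy rE (natExtMap T) ε ≤ sepEntropy dX T (ε / c) := by
      intro ε hε
      have hεc : 0 < ε / c := by positivity
      obtain ⟨k, hk⟩ := kchoice ε hε
      obtain ⟨γ, instγ, t, ht⟩ := exists_net (X := X) (ε / c) hεc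
      haveI : Nonempty γ := ⟨t (Classical.arbitrary X)⟩
      have ht' : ∀ u v : X, t u = t v → ¬ (ε / c) < dX u v :=
        fun u v h => not_lt.2 (ht u v h)
      have hM1 : 1 ≤ Fintype.card γ := Fintype.card_pos
      have hcount : ∀ n : ℕ, sepNum rE (natExtMap T) n ε
          ≤ sepNum dX T n (ε / c) * Fintype.card γ ^ k := by
        intro n
        have h1 : sepNum rE (natExtMap T) n ε ≤ sepNum dX T (n + k) (ε / c) :=
          sepNum_le_sepNum rE (natExtMap T) dX T
            (sepSet_incl_two T δ hD0 hD hc0 hcδ ε hε n hk) (hbX _ hεc (n + k))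
        have h2 : sepNum dX T (n + k) (ε / c)
            ≤ sepNum dX T n (ε / c) * Fintype.card γ ^ k :=
          csSup_le ⟨0, zero_mem_sepSet dX T (n+k) (ε/c)⟩
            (sepSet_card_le_subadd dX T t ht' n k)
        exact le_trans h1 h2
      have hpt : ∀ n : ℕ, Real.log (sepNum rE (natExtMap T) n ε) / (n:ℝ)
          ≤ Real.log (sepNum dX T n (ε / c)) / (n:ℝ)
            + ((k : ℝ) * Real.log (Fintype.card γ)) / (n:ℝ) := by
        intro n
        cases n with
        | zero => simp
        | succ n =>
          have hs1 : (1:ℕ) ≤ sepNum rE (natExtMap T) (n+1) ε :=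
            one_le_sepNum rE (natExtMap T) (hbE ε hε (n+1))
          have hs2 : (1:ℕ) ≤ sepNum dX T (n+1) (ε / c) :=
            one_le_sepNum dX T (hbX _ hεc (n+1))
          have hlog : Real.log (sepNum rE (natExtMap T) (n+1) ε)
              ≤ Real.log (sepNum dX T (n+1) (ε / c))
                + (k : ℝ) * Real.log (Fintype.card γ) := by
            have e1 : Real.log (sepNum rE (natExtMap T) (n+1) ε)
                ≤ Real.log ((sepNum dX T (n+1) (ε / c) * Fintype.card γ ^ k : ℕ)) :=
              Real.log_le_log (by exact_mod_cast lt_of_lt_of_le one_pos hs1)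
                (by exact_mod_cast hcount (n+1))
            have e2 : ((sepNum dX T (n+1) (ε / c) * Fintype.card γ ^ k : ℕ) : ℝ)
                = (sepNum dX T (n+1) (ε / c) : ℝ) * ((Fintype.card γ : ℝ)) ^ k := by
              push_cast; ring
            have e3 : Real.log ((sepNum dX T (n+1) (ε / c) : ℝ) * ((Fintype.card γ : ℝ)) ^ k)
                = Real.log (sepNum dX T (n+1) (ε / c))
                  + Real.log (((Fintype.card γ : ℝ)) ^ k) := by
              refine Real.log_mul ?_ ?_
              · have : (0:ℝ) < (sepNum dX T (n+1) (ε / c) : ℝ) := by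
                  exact_mod_cast lt_of_lt_of_le one_pos hs2
                exact ne_of_gt this
              · have : (0:ℝ) < ((Fintype.card γ : ℝ)) ^ k := by
                  have : (0:ℝ) < (Fintype.card γ : ℝ) := by exact_mod_cast lt_of_lt_of_le one_pos hM1
                  positivity
                exact ne_of_gt this
            rw [e2, e3, Real.log_pow] at e1
            exact e1
          have hpos : (0:ℝ) < ((n + 1 : ℕ) : ℝ) := by positivity
          rw [← add_div]
          exact (div_le_div_iff_of_pos_right hpos).2 hlog
      have hw : Filter.Tendsto
          (fun n : ℕ => ((k : ℝ) * Real.log (Fintype.card γ)) / (n:ℝ))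
          Filter.atTop (nhds 0) := tendsto_const_div_atTop_nhds_zero_nat _
      exact limsup_le_of_le_add
        (fun n => entropy_term_nonneg rE (natExtMap T) (hbE ε hε n)) hpt hw
        ⟨_, fun n => term_le_log_card dX T t ht' n⟩
    -- the two normalized quantities
    set A : ℝ → ℝ := fun ε => sepEntropy dX T ε / Real.log (1/ε) with hA
    set B : ℝ → ℝ := fun ε => sepEntropy rE (natExtMap T) ε / Real.log (1/ε) with hB
    have hm1 : Filter.map (fun ε : ℝ => ε / c) l = l := by
      have he : (fun ε : ℝ => ε / c) = (fun ε : ℝ => c⁻¹ * ε) :=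
        funext fun ε => div_eq_inv_mul ε c
      rw [he]
      exact map_mul_nhdsWithin (by positivity)
    have hm2 : Filter.map (fun ε : ℝ => δ 0 * ε) l = l := map_mul_nhdsWithin (hδpos 0)
    have hLtop : Filter.Tendsto (fun ε : ℝ => Real.log (1/ε)) l Filter.atTop :=
      tendsto_log_one_div
    have hev_pos : ∀ᶠ ε in l, 0 < ε := by
      filter_upwards [self_mem_nhdsWithin] with ε hε
      exact hε
    have hA0 : ∀ᶠ ε in l, 0 ≤ A ε := by
      filter_upwards [hev_pos, hLtop.eventually_ge_atTop 1] with ε h1 h2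
      exact div_nonneg (entX_nonneg ε h1) (by linarith)
    have hB0 : ∀ᶠ ε in l, 0 ≤ B ε := by
      filter_upwards [hev_pos, hLtop.eventually_ge_atTop 1] with ε h1 h2
      exact div_nonneg (entE_nonneg ε h1) (by linarith)
    have h1 : ∀ η : ℝ, 0 < η → ∀ᶠ ε in l, B ε ≤ (1 + η) * A (ε / c) := by
      intro η hη
      filter_upwards [hev_pos, hLtop.eventually_ge_atTop (1 + |Real.log c|),
        hLtop.eventually_ge_atTop (|Real.log c| / η)] with ε hε hL1 hL2
      have hLpos : 0 < Real.log (1/ε) := by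
        have := abs_nonneg (Real.log c); linarith
      have hεc : 0 < ε / c := by positivity
      have hL' : Real.log (1 / (ε/c)) = Real.log c + Real.log (1/ε) := by
        have hq : 1 / (ε/c) = c * (1/ε) := by field_simp
        rw [hq, Real.log_mul (ne_of_gt hc0) (ne_of_gt (by positivity : (0:ℝ) < 1/ε))]
      have hL'pos : 0 < Real.log (1/(ε/c)) := by
        rw [hL']
        have := neg_abs_le (Real.log c); linarith
      have hstep1 : B ε ≤ sepEntropy dX T (ε/c) / Real.log (1/ε) :=
        (div_le_div_iff_of_pos_right hLpos).2 (entB ε hε)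
      have hsplit : sepEntropy dX T (ε/c) / Real.log (1/ε)
          = (sepEntropy dX T (ε/c) / Real.log (1/(ε/c)))
            * (Real.log (1/(ε/c)) / Real.log (1/ε)) := by
        rw [div_mul_div_comm, mul_comm (Real.log (1/(ε/c))) (Real.log (1/ε)),
          mul_div_mul_right _ _ (ne_of_gt hL'pos)]
      have hratio : Real.log (1/(ε/c)) / Real.log (1/ε) ≤ 1 + η := by
        rw [div_le_iff₀ hLpos, hL']
        have ha : Real.log c ≤ |Real.log c| := le_abs_self _
        have hb : |Real.log c| ≤ Real.log (1/ε) * η := (div_le_iff₀ hη).1 hL2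
        nlinarith
      have hAr : 0 ≤ sepEntropy dX T (ε/c) / Real.log (1/(ε/c)) :=
        div_nonneg (entX_nonneg _ hεc) hL'pos.le
      calc B ε ≤ sepEntropy dX T (ε/c) / Real.log (1/ε) := hstep1
        _ = (sepEntropy dX T (ε/c) / Real.log (1/(ε/c)))
            * (Real.log (1/(ε/c)) / Real.log (1/ε)) := hsplit
        _ ≤ (sepEntropy dX T (ε/c) / Real.log (1/(ε/c))) * (1 + η) :=
            mul_le_mul_of_nonneg_left hratio hAr
        _ = (1 + η) * A (ε / c) := mul_comm _ _
    have h2 : ∀ η : ℝ, 0 < η → ∀ᶠ ε in l, A ε ≤ (1 + η) * B (δ 0 * ε) := by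
      intro η hη
      filter_upwards [hev_pos, hLtop.eventually_ge_atTop (1 + |Real.log (δ 0)|),
        hLtop.eventually_ge_atTop (|Real.log (δ 0)| / η)] with ε hε hL1 hL2
      have hLpos : 0 < Real.log (1/ε) := by
        have := abs_nonneg (Real.log (δ 0)); linarith
      have hδε : 0 < δ 0 * ε := mul_pos (hδpos 0) hε
      have hL' : Real.log (1 / (δ 0 * ε)) = -Real.log (δ 0) + Real.log (1/ε) := by
        have hq : 1 / (δ 0 * ε) = (δ 0)⁻¹ * (1/ε) := by field_simp
        rw [hq, Real.log_mul (inv_ne_zero (ne_of_gt (hδpos 0))) (ne_of_gt (by positivity : (0:ℝ) < 1/ε)),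
          Real.log_inv]
      have hL'pos : 0 < Real.log (1/(δ 0 * ε)) := by
        rw [hL']
        have := neg_abs_le (Real.log (δ 0))
        have := le_abs_self (Real.log (δ 0))
        linarith
      have hstep1 : A ε ≤ sepEntropy rE (natExtMap T) (δ 0 * ε) / Real.log (1/ε) :=
        (div_le_div_iff_of_pos_right hLpos).2 (entA ε hε)
      have hsplit : sepEntropy rE (natExtMap T) (δ 0 * ε) / Real.log (1/ε)
          = (sepEntropy rE (natExtMap T) (δ 0 * ε) / Real.log (1/(δ 0 * ε)))
            * (Real.log (1/(δ 0 * ε)) / Real.log (1/ε)) := by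
        rw [div_mul_div_comm, mul_comm (Real.log (1/(δ 0 * ε))) (Real.log (1/ε)),
          mul_div_mul_right _ _ (ne_of_gt hL'pos)]
      have hratio : Real.log (1/(δ 0 * ε)) / Real.log (1/ε) ≤ 1 + η := by
        rw [div_le_iff₀ hLpos, hL']
        have ha' : -Real.log (δ 0) ≤ |Real.log (δ 0)| := by
          rw [← abs_neg]; exact le_abs_self _
        have hb : |Real.log (δ 0)| ≤ Real.log (1/ε) * η := (div_le_iff₀ hη).1 hL2
        nlinarith
      have hBr : 0 ≤ sepEntropy rE (natExtMap T) (δ 0 * ε) / Real.log (1/(δ 0 * ε)) :=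
        div_nonneg (entE_nonneg _ hδε) hL'pos.le
      calc A ε ≤ sepEntropy rE (natExtMap T) (δ 0 * ε) / Real.log (1/ε) := hstep1
        _ = (sepEntropy rE (natExtMap T) (δ 0 * ε) / Real.log (1/(δ 0 * ε)))
            * (Real.log (1/(δ 0 * ε)) / Real.log (1/ε)) := hsplit
        _ ≤ (sepEntropy rE (natExtMap T) (δ 0 * ε) / Real.log (1/(δ 0 * ε))) * (1 + η) :=
            mul_le_mul_of_nonneg_left hratio hBr
        _ = (1 + η) * B (δ 0 * ε) := mul_comm _ _
    obtain ⟨e1, e2⟩ := master_limsup_liminf l hm1 hm2 hA0 hB0 h1 h2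
    exact ⟨e1, e2⟩
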